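/- Let (n_k) be a sequence of positive integers with n_k = k^p for some fixed real p ≥ 0, and set s_N² = Σ_{k=1}^N n_k². Then for every ε > 0, Σ_{k=1}^N exp(-ε s_N / n_k) → 0 as N → ∞. -/

import Mathlib

open Real Filter

lemma sqrt_tendsto_atTop' : Tendsto Real.sqrt atTop atTop := by
  have h := tendsto_rpow_atTop (by norm_num : (0:ℝ) < 1/2)
  refine h.congr' ?_
  filter_upwards [eventually_ge_atTop (0:ℝ)] with x hx
  rw [Real.sqrt_eq_rpow]

lemma aux_mul_exp_tendsto (c : ℝ) (hc : 0 < c) :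
    Tendsto (fun N : ℕ => (N : ℝ) * Real.exp (-(c * Real.sqrt N))) atTop (nhds 0) := by
  have h1 : Tendsto (fun x : ℝ => x ^ 2 * Real.exp (-x)) atTop (nhds 0) :=
    Real.tendsto_pow_mul_exp_neg_atTop_nhds_zero 2
  have h2 : Tendsto (fun N : ℕ => c * Real.sqrt N) atTop atTop := by
    apply Tendsto.const_mul_atTop hc
    exact sqrt_tendsto_atTop'.comp tendsto_natCast_atTop_atTop
  have h3 := (h1.comp h2).const_mul ((c ^ 2)⁻¹)
  rw [mul_zero] at h3
  refine h3.congr fun N => ?_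
  have hs : Real.sqrt (N : ℝ) ^ 2 = (N : ℝ) := Real.sq_sqrt (Nat.cast_nonneg N)
  have hc2 : (c : ℝ) ^ 2 ≠ 0 := pow_ne_zero 2 hc.ne'
  field_simp [Function.comp]
  simp only [Function.comp_apply]
  ring_nf
  rw [hs]
  ring

theorem sum_exp_tendsto_zero_of_polynomial_multiplicities
    (p : ℝ) (hp : 0 ≤ p) (ε : ℝ) (hε : 0 < ε) :
    Tendsto (fun N : ℕ => ∑ k ∈ Finset.Icc 1 N,
        Real.exp (-ε * Real.sqrt (∑ j ∈ Finset.Icc 1 N, ((j:ℝ)^p)^2) / (k:ℝ)^p))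
      atTop (nhds 0) := by
  set c : ℝ := ε * (2:ℝ) ^ (-(p + 1/2)) with hc_def
  have hc : 0 < c := mul_pos hε (Real.rpow_pos_of_pos two_pos _)
  refine squeeze_zero (g := fun N : ℕ => (N : ℝ) * Real.exp (-(c * Real.sqrt N)))
    (fun N => Finset.sum_nonneg fun k _ => (Real.exp_pos _).le) ?_ (aux_mul_exp_tendsto c hc)
  intro N
  rcases Nat.eq_zero_or_pos N with rfl | hN
  · simp
  -- notation
  set S : ℝ := ∑ j ∈ Finset.Icc 1 N, ((j:ℝ)^p)^2 with hS_def
  have hS0 : 0 ≤ S := Finset.sum_nonneg fun j _ => sq_nonneg _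
  have hNr : (1:ℝ) ≤ (N:ℝ) := by exact_mod_cast hN
  have hNpos : (0:ℝ) < N := lt_of_lt_of_le one_pos hNr
  -- lower bound on S
  set m : ℕ := (N + 1) / 2 with hm_def
  have hm1 : 1 ≤ m := by omega
  have hmN : m ≤ N := by omega
  have hmr : (N:ℝ)/2 ≤ (m:ℝ) := by
    have : N ≤ 2 * m := by omega
    have := (Nat.cast_le (α := ℝ)).2 this
    push_cast at this
    linarith
  have hcardr : (N:ℝ)/2 ≤ ((N + 1 - m : ℕ) : ℝ) := by
    have : N ≤ 2 * (N + 1 - m) := by omega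
    have := (Nat.cast_le (α := ℝ)).2 this
    push_cast [Nat.cast_sub (by omega : m ≤ N + 1)] at this ⊢
    linarith
  have hhalf : (0:ℝ) ≤ (N:ℝ)/2 := by positivity
  have hsub : Finset.Icc m N ⊆ Finset.Icc 1 N := by
    apply Finset.Icc_subset_Icc_left hm1
  have hstep1 : ((N + 1 - m : ℕ) : ℝ) * (((N:ℝ)/2) ^ p) ^ 2 ≤ S := by
    have h1 : ∀ j ∈ Finset.Icc m N, (((N:ℝ)/2) ^ p) ^ 2 ≤ ((j:ℝ)^p)^2 := by
      intro j hj
      have hj' : m ≤ j := (Finset.mem_Icc.1 hj).1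
      have : ((N:ℝ)/2) ^ p ≤ (j:ℝ) ^ p := by
        apply Real.rpow_le_rpow hhalf _ hp
        exact le_trans hmr (by exact_mod_cast hj')
      have hb : (0:ℝ) ≤ ((N:ℝ)/2) ^ p := Real.rpow_nonneg hhalf p
      nlinarith
    have h2 : (Finset.Icc m N).card • ((((N:ℝ)/2) ^ p) ^ 2) ≤
        ∑ j ∈ Finset.Icc m N, ((j:ℝ)^p)^2 :=
      Finset.card_nsmul_le_sum _ _ _ h1
    have h3 : ∑ j ∈ Finset.Icc m N, ((j:ℝ)^p)^2 ≤ S :=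
      Finset.sum_le_sum_of_subset_of_nonneg hsub (fun j _ _ => sq_nonneg _)
    rw [Nat.card_Icc] at h2
    simp only [nsmul_eq_mul] at h2
    linarith
  have hstep2 : ((N:ℝ)/2) * (((N:ℝ)/2) ^ p) ^ 2 ≤ S := by
    have hb : (0:ℝ) ≤ (((N:ℝ)/2) ^ p) ^ 2 := sq_nonneg _
    nlinarith
  -- sqrt lower bound
  have hsqrt : ((N:ℝ)/2) ^ p * Real.sqrt ((N:ℝ)/2) ≤ Real.sqrt S := by
    have := Real.sqrt_le_sqrt hstep2
    rw [Real.sqrt_mul hhalf, Real.sqrt_sq (Real.rpow_nonneg hhalf p)] at this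
    linarith [this]
  -- key: c * sqrt N ≤ ε * sqrt S / N^p
  have hNp : (0:ℝ) < (N:ℝ) ^ p := Real.rpow_pos_of_pos hNpos p
  have hkey : c * Real.sqrt N ≤ ε * Real.sqrt S / (N:ℝ) ^ p := by
    rw [le_div_iff₀ hNp]
    have hrw : ((N:ℝ)/2) ^ p = (N:ℝ)^p * (2:ℝ)^(-p) := by
      rw [Real.div_rpow (le_of_lt hNpos) (by norm_num), Real.rpow_neg (by norm_num)]
      ring
    have h2inv : ((2:ℝ))^(-(1/2:ℝ)) = (Real.sqrt 2)⁻¹ := by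
      rw [Real.rpow_neg (by norm_num), Real.sqrt_eq_rpow]
    have hrw2 : Real.sqrt ((N:ℝ)/2) = Real.sqrt N * (2:ℝ)^(-(1/2:ℝ)) := by
      rw [h2inv, Real.sqrt_div (Nat.cast_nonneg N), div_eq_mul_inv]
    have hadd : (2:ℝ)^(-p) * (2:ℝ)^(-(1/2:ℝ)) = (2:ℝ)^(-(p+1/2)) := by
      rw [← Real.rpow_add two_pos]; ring_nf
    calc c * Real.sqrt N * (N:ℝ)^p
        = ε * (((N:ℝ)^p * (2:ℝ)^(-p)) * (Real.sqrt N * (2:ℝ)^(-(1/2:ℝ)))) := by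
          rw [hc_def, ← hadd]; ring
      _ = ε * (((N:ℝ)/2)^p * Real.sqrt ((N:ℝ)/2)) := by rw [hrw, hrw2]
      _ ≤ ε * Real.sqrt S := mul_le_mul_of_nonneg_left hsqrt hε.le
  -- each term bound
  have hterm : ∀ k ∈ Finset.Icc 1 N,
      Real.exp (-ε * Real.sqrt S / (k:ℝ)^p) ≤ Real.exp (-(c * Real.sqrt N)) := by
    intro k hk
    rw [Finset.mem_Icc] at hk
    have hk1 : (1:ℝ) ≤ (k:ℝ) := by exact_mod_cast hk.1
    have hkp : (0:ℝ) < (k:ℝ) ^ p := Real.rpow_pos_of_pos (lt_of_lt_of_le one_pos hk1) p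
    have hkN : (k:ℝ)^p ≤ (N:ℝ)^p :=
      Real.rpow_le_rpow (by linarith) (by exact_mod_cast hk.2) hp
    apply Real.exp_le_exp.2
    have hnum : -ε * Real.sqrt S ≤ 0 := by
      have := Real.sqrt_nonneg S
      nlinarith
    calc -ε * Real.sqrt S / (k:ℝ)^p ≤ -ε * Real.sqrt S / (N:ℝ)^p := by
          rw [div_le_div_iff₀ hkp hNp]
          nlinarith
        _ ≤ -(c * Real.sqrt N) := by
          rw [neg_mul, neg_div, neg_le_neg_iff]
          exact hkey
  calc ∑ k ∈ Finset.Icc 1 N, Real.exp (-ε * Real.sqrt S / (k:ℝ)^p)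
      ≤ (Finset.Icc 1 N).card • Real.exp (-(c * Real.sqrt N)) :=
        Finset.sum_le_card_nsmul _ _ _ hterm
    _ = (N:ℝ) * Real.exp (-(c * Real.sqrt N)) := by
        rw [Nat.card_Icc, nsmul_eq_mul]; norm_num
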